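/- arXiv:2108.06998 — 5 statements merged into one kernel-verified Lean document; each statement's English description precedes it below -/
import Mathlib

section
/- Let Γ̃ be a group, Γ ⊆ Γ̃ a subgroup of index 2, R a commutative ring, N ≥ 1 an integer, and χ : Γ̃ → Rˣ a group homomorphism. Let ρ : Γ → GL_N(R) be a group homomorphism, γ an element of Γ̃ \ Γ, B ∈ GL_N(R), and μ_B ∈ {1, −1} ⊆ R, such that: (i) ρ(γ x γ⁻¹) = χ(x) · B · (ρ(x)ᵀ)⁻¹ · B⁻¹ for all x ∈ Γ, and (ii) B · (Bᵀ)⁻¹ = μ_B · χ(γ)⁻¹ · ρ(γ²). Then there exists a unique group homomorphism r : Γ̃ → 𝒢_N(R) such that r(x) = (ρ(x), χ(x)) (in the identity component) for every x ∈ Γ and r(γ) = (B, μ_B·χ(γ))𝔠. -/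
open Matrix

section CSD

variable (N : ℕ) (R : Type*) [CommRing R]

/-- The "transpose-inverse" homomorphism `g ↦ (gᵀ)⁻¹` of `GL_N(R)`. -/
def tinv : (Matrix (Fin N) (Fin N) R)ˣ →* (Matrix (Fin N) (Fin N) R)ˣ where
  toFun u :=
    { val := ((↑(u⁻¹) : Matrix (Fin N) (Fin N) R))ᵀ
      inv := ((↑u : Matrix (Fin N) (Fin N) R))ᵀ
      val_inv := by
        rw [← Matrix.transpose_mul, ← Units.val_mul, mul_inv_cancel, Units.val_one,
          Matrix.transpose_one]
      inv_val := by
        rw [← Matrix.transpose_mul, ← Units.val_mul, inv_mul_cancel, Units.val_one,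
          Matrix.transpose_one] }
  map_one' := by
    apply Units.ext
    simp
  map_mul' u v := by
    apply Units.ext
    simp [_root_.mul_inv_rev, Matrix.transpose_mul]

@[simp] lemma tinv_val (u : (Matrix (Fin N) (Fin N) R)ˣ) :
    (tinv N R u : Matrix (Fin N) (Fin N) R) = ((↑(u⁻¹) : Matrix (Fin N) (Fin N) R))ᵀ := rfl

lemma tinv_tinv (u : (Matrix (Fin N) (Fin N) R)ˣ) : tinv N R (tinv N R u) = u := by
  apply Units.ext
  show (((↑u : Matrix (Fin N) (Fin N) R))ᵀ)ᵀ = (↑u : Matrix (Fin N) (Fin N) R)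
  exact Matrix.transpose_transpose _

/-- The central embedding `Rˣ → GL_N(R)` by scalar matrices. -/
def sUnit : Rˣ →* (Matrix (Fin N) (Fin N) R)ˣ :=
  Units.map (algebraMap R (Matrix (Fin N) (Fin N) R)).toMonoidHom

lemma sUnit_val (μ : Rˣ) :
    (sUnit N R μ : Matrix (Fin N) (Fin N) R) = algebraMap R _ (μ : R) := rfl

lemma sUnit_comm (μ : Rˣ) (w : (Matrix (Fin N) (Fin N) R)ˣ) :
    sUnit N R μ * w = w * sUnit N R μ := by
  apply Units.ext
  simpa [sUnit_val] using Algebra.commutes (μ : R) (↑w : Matrix (Fin N) (Fin N) R)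

lemma tinv_sUnit (μ : Rˣ) : tinv N R (sUnit N R μ) = sUnit N R μ⁻¹ := by
  apply Units.ext
  rw [tinv_val, ← map_inv, sUnit_val]
  simp [Matrix.algebraMap_eq_diagonal]

/-- The order-two automorphism `(g, μ) ↦ (μ · (gᵀ)⁻¹, μ)` of `GL_N(R) × Rˣ`. -/
def csAut : MulAut ((Matrix (Fin N) (Fin N) R)ˣ × Rˣ) where
  toFun p := (sUnit N R p.2 * tinv N R p.1, p.2)
  invFun p := (sUnit N R p.2 * tinv N R p.1, p.2)
  left_inv p := by
    refine Prod.ext ?_ rfl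
    show sUnit N R p.2 * tinv N R (sUnit N R p.2 * tinv N R p.1) = p.1
    rw [_root_.map_mul, tinv_sUnit, tinv_tinv, ← mul_assoc, ← _root_.map_mul, mul_inv_cancel, _root_.map_one, one_mul]
  right_inv p := by
    refine Prod.ext ?_ rfl
    show sUnit N R p.2 * tinv N R (sUnit N R p.2 * tinv N R p.1) = p.1
    rw [_root_.map_mul, tinv_sUnit, tinv_tinv, ← mul_assoc, ← _root_.map_mul, mul_inv_cancel, _root_.map_one, one_mul]
  map_mul' p q := by
    refine Prod.ext ?_ rfl
    show sUnit N R (p.2 * q.2) * tinv N R (p.1 * q.1)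
        = sUnit N R p.2 * tinv N R p.1 * (sUnit N R q.2 * tinv N R q.1)
    rw [_root_.map_mul, _root_.map_mul]
    exact Commute.mul_mul_mul_comm (sUnit_comm N R q.2 (tinv N R p.1)) _ _

lemma csAut_sq : csAut N R * csAut N R = 1 := by
  refine MulEquiv.ext fun p => ?_
  show csAut N R (csAut N R p) = p
  exact (csAut N R).left_inv p

/-- The action of `{1, 𝔠} ≅ ℤˣ` on `GL_N(R) × Rˣ` defining `𝒢_N(R)`. -/
def csPhi : ℤˣ →* MulAut ((Matrix (Fin N) (Fin N) R)ˣ × Rˣ) :=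
  MonoidHom.mk' (fun ε => if ε = 1 then 1 else csAut N R) (by
    have h1 : ((-1 : ℤˣ)) ≠ 1 := by decide
    have h2 : ((-1 : ℤˣ) * (-1 : ℤˣ)) = 1 := by decide
    intro a b
    rcases Int.units_eq_one_or a with ha | ha <;> rcases Int.units_eq_one_or b with hb | hb <;>
      subst ha <;> subst hb <;> simp [h1, h2, csAut_sq])

/-- The group `𝒢_N(R) = (GL_N(R) × Rˣ) ⋊ {1, 𝔠}`, where `𝔠` corresponds to `-1 : ℤˣ`. -/
abbrev GN := ((Matrix (Fin N) (Fin N) R)ˣ × Rˣ) ⋊[csPhi N R] ℤˣ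

/-- The similitude character `ν : 𝒢_N(R) → Rˣ`, with `ν((g,μ)) = μ` and `ν(𝔠) = -1`. -/
def nu : GN N R →* Rˣ :=
  SemidirectProduct.lift
    (MonoidHom.snd ((Matrix (Fin N) (Fin N) R)ˣ) Rˣ)
    (Units.map (Int.castRingHom R).toMonoidHom)
    (by
      intro ε
      ext p
      rcases Int.units_eq_one_or ε with h | h <;> subst h <;>
        simp [csPhi, csAut, MulAut.conj_apply, mul_right_comm])

end CSD

/-- Lemma 2.1.1(2): given `ρ : Γ → GL_N(R)`, `γ ∈ Γ̃ \ Γ`, `B ∈ GL_N(R)`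
and `μ_B ∈ {±1}` with `ρ(γxγ⁻¹) = χ(x)·B·(ρ(x)ᵀ)⁻¹·B⁻¹` for all `x ∈ Γ` and
`B·(Bᵀ)⁻¹ = μ_B·χ(γ)⁻¹·ρ(γ²)`, there is a unique homomorphism `r : Γ̃ → 𝒢_N(R)` with
`r|_Γ = (ρ, χ|_Γ)1` and `r(γ) = (B, μ_B·χ(γ))𝔠`.
(Note `(Bᵀ)⁻¹ = (B⁻¹)ᵀ` is `tinv B`, and `γ² ∈ Γ` since `Γ` has index two, whence the
quantified forms of the two hypotheses.) -/
theorem statement1 {R : Type*} [CommRing R] {N : ℕ} (hN : 1 ≤ N)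
    {Γt : Type*} [Group Γt] (Γ : Subgroup Γt) (hΓ : Γ.index = 2)
    (χ : Γt →* Rˣ) (ρ : Γ →* (Matrix (Fin N) (Fin N) R)ˣ)
    (γ : Γt) (hγ : γ ∉ Γ)
    (B : (Matrix (Fin N) (Fin N) R)ˣ) (μB : Rˣ) (hμB : μB = 1 ∨ μB = -1)
    (hconj : ∀ x y : Γ, (y : Γt) = γ * x * γ⁻¹ →
      ρ y = sUnit N R (χ x) * B * tinv N R (ρ x) * B⁻¹)
    (hsq : ∀ z : Γ, (z : Γt) = γ * γ →
      B * tinv N R B = sUnit N R (μB * (χ γ)⁻¹) * ρ z) :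
    ∃! r : Γt →* GN N R,
      (∀ x : Γ, r x = SemidirectProduct.inl (ρ x, χ x)) ∧
      r γ = SemidirectProduct.inl (B, μB * χ γ) * SemidirectProduct.inr (-1 : ℤˣ) := by
  classical
  have hIff : ∀ a b : Γt, a * b ∈ Γ ↔ (a ∈ Γ ↔ b ∈ Γ) := fun a b =>
    Subgroup.mul_mem_iff_of_index_two hΓ
  have hγi : γ⁻¹ ∉ Γ := fun h => hγ (by simpa using inv_mem h)
  have hγx : ∀ x : Γ, γ * (x : Γt) ∉ Γ := by
    intro x h
    rw [hIff] at h
    exact hγ (h.mpr x.2)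
  have hconjmem : ∀ x : Γ, γ * (x : Γt) * γ⁻¹ ∈ Γ :=
    fun x => (hIff _ _).mpr (iff_of_false (hγx x) hγi)
  have hsqmem : γ * γ ∈ Γ := (hIff _ _).mpr Iff.rfl
  have hMem2 : ∀ {g : Γt}, g ∉ Γ → g * γ⁻¹ ∈ Γ :=
    fun h => (hIff _ _).mpr (iff_of_false h hγi)
  have hμB2 : μB * μB = 1 := by rcases hμB with h | h <;> subst h <;> simp
  -- the homomorphism on Γ
  set f : Γ →* GN N R := (SemidirectProduct.inl).comp (ρ.prod (χ.comp Γ.subtype)) with hfdef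
  have hfapp : ∀ x : Γ, f x = SemidirectProduct.inl (ρ x, χ x) := fun _ => rfl
  set cEl : GN N R :=
    SemidirectProduct.inl (B, μB * χ γ) * SemidirectProduct.inr (-1 : ℤˣ) with hcdef
  have hφ : csPhi N R (-1) = csAut N R := by
    show (if ((-1 : ℤˣ)) = 1 then (1 : MulAut _) else csAut N R) = csAut N R
    rw [if_neg (by decide)]
  have hswap : ∀ q : (Matrix (Fin N) (Fin N) R)ˣ × Rˣ,
      (SemidirectProduct.inr (-1 : ℤˣ) : GN N R) * SemidirectProduct.inl q
        = SemidirectProduct.inl (csAut N R q) * SemidirectProduct.inr (-1 : ℤˣ) := by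
    intro q
    have h := SemidirectProduct.inl_aut (φ := csPhi N R) (-1 : ℤˣ) q
    rw [hφ] at h
    rw [h, mul_assoc, ← _root_.map_mul, inv_mul_cancel, _root_.map_one, mul_one]
  have hinr2 : (SemidirectProduct.inr (-1 : ℤˣ) : GN N R)
      * SemidirectProduct.inr (-1 : ℤˣ) = 1 := by
    rw [← _root_.map_mul]
    norm_num
  -- key commutation: cEl * f x = f (γ x γ⁻¹) * cEl
  have hA : ∀ x : Γ, cEl * f x = f ⟨γ * (x : Γt) * γ⁻¹, hconjmem x⟩ * cEl := by
    intro x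
    set y : Γ := ⟨γ * (x : Γt) * γ⁻¹, hconjmem x⟩ with hy
    have hρy : ρ y = sUnit N R (χ x) * B * tinv N R (ρ x) * B⁻¹ := hconj x y rfl
    have hχy : χ (y : Γt) = χ (x : Γt) := by
      show χ (γ * (x : Γt) * γ⁻¹) = χ (x : Γt)
      rw [_root_.map_mul, _root_.map_mul, _root_.map_inv, mul_comm (χ γ) (χ (x : Γt)), mul_assoc,
        mul_inv_cancel, mul_one]
    have hcs : csAut N R (ρ x, χ x) = (sUnit N R (χ x) * tinv N R (ρ x), χ x) := rfl
    have hprod : ((B, μB * χ γ) : (Matrix (Fin N) (Fin N) R)ˣ × Rˣ) * csAut N R (ρ x, χ x)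
        = (ρ y, χ (y : Γt)) * (B, μB * χ γ) := by
      rw [hcs]
      refine Prod.ext ?_ ?_
      · show B * (sUnit N R (χ x) * tinv N R (ρ x)) = ρ y * B
        rw [hρy, inv_mul_cancel_right, ← mul_assoc, ← sUnit_comm]
      · show μB * χ γ * χ (x : Γt) = χ (y : Γt) * (μB * χ γ)
        rw [hχy, mul_comm]
    calc cEl * f x
        = SemidirectProduct.inl (B, μB * χ γ)
            * (SemidirectProduct.inr (-1 : ℤˣ) * SemidirectProduct.inl (ρ x, χ x)) := by
          rw [hcdef, hfapp]; group
      _ = SemidirectProduct.inl (B, μB * χ γ)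
            * (SemidirectProduct.inl (csAut N R (ρ x, χ x))
              * SemidirectProduct.inr (-1 : ℤˣ)) := by rw [hswap]
      _ = SemidirectProduct.inl ((B, μB * χ γ) * csAut N R (ρ x, χ x))
            * SemidirectProduct.inr (-1 : ℤˣ) := by rw [_root_.map_mul]; group
      _ = SemidirectProduct.inl ((ρ y, χ (y : Γt)) * (B, μB * χ γ))
            * SemidirectProduct.inr (-1 : ℤˣ) := by rw [hprod]
      _ = f y * cEl := by rw [_root_.map_mul, hfapp, hcdef]; group
  have hB : cEl * cEl = f ⟨γ * γ, hsqmem⟩ := by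
    set z : Γ := ⟨γ * γ, hsqmem⟩ with hz
    have hBB : B * tinv N R B = sUnit N R (μB * (χ γ)⁻¹) * ρ z := hsq z rfl
    have hcs : csAut N R (B, μB * χ γ) = (sUnit N R (μB * χ γ) * tinv N R B, μB * χ γ) := rfl
    have hprod : ((B, μB * χ γ) : (Matrix (Fin N) (Fin N) R)ˣ × Rˣ) * csAut N R (B, μB * χ γ)
        = (ρ z, χ (z : Γt)) := by
      rw [hcs]
      refine Prod.ext ?_ ?_
      · show B * (sUnit N R (μB * χ γ) * tinv N R B) = ρ z
        rw [← mul_assoc, ← sUnit_comm, mul_assoc, hBB, ← mul_assoc, ← _root_.map_mul,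
          mul_mul_mul_comm, hμB2, mul_inv_cancel, one_mul, _root_.map_one, one_mul]
      · show μB * χ γ * (μB * χ γ) = χ ((z : Γt))
        show μB * χ γ * (μB * χ γ) = χ (γ * γ)
        rw [_root_.map_mul, mul_mul_mul_comm, hμB2, one_mul]
    calc cEl * cEl
        = SemidirectProduct.inl (B, μB * χ γ)
            * (SemidirectProduct.inr (-1 : ℤˣ) * SemidirectProduct.inl (B, μB * χ γ))
            * SemidirectProduct.inr (-1 : ℤˣ) := by rw [hcdef]; group
      _ = SemidirectProduct.inl (B, μB * χ γ)
            * (SemidirectProduct.inl (csAut N R (B, μB * χ γ))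
              * SemidirectProduct.inr (-1 : ℤˣ))
            * SemidirectProduct.inr (-1 : ℤˣ) := by rw [hswap]
      _ = SemidirectProduct.inl ((B, μB * χ γ) * csAut N R (B, μB * χ γ))
            * (SemidirectProduct.inr (-1 : ℤˣ) * SemidirectProduct.inr (-1 : ℤˣ)) := by
          rw [_root_.map_mul]; group
      _ = SemidirectProduct.inl (ρ z, χ (z : Γt)) := by rw [hprod, hinr2, mul_one]
      _ = f z := (hfapp z).symm
  -- the extension
  let F : Γt → GN N R := fun g =>
    if h : g ∈ Γ then f ⟨g, h⟩ else f ⟨g * γ⁻¹, hMem2 h⟩ * cEl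
  have hFmem : ∀ {g : Γt} (h : g ∈ Γ), F g = f ⟨g, h⟩ := fun h => dif_pos h
  have hFnot : ∀ {g : Γt} (h : g ∉ Γ), F g = f ⟨g * γ⁻¹, hMem2 h⟩ * cEl :=
    fun h => dif_neg h
  have hmul : ∀ a b : Γt, F (a * b) = F a * F b := by
    intro a b
    by_cases ha : a ∈ Γ <;> by_cases hb : b ∈ Γ
    · have hab : a * b ∈ Γ := mul_mem ha hb
      rw [hFmem hab, hFmem ha, hFmem hb, ← _root_.map_mul]
      congr 1
    · have hab : a * b ∉ Γ := fun h => hb (((hIff a b).mp h).mp ha)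
      calc F (a * b) = f ⟨a * b * γ⁻¹, hMem2 hab⟩ * cEl := hFnot hab
        _ = f (⟨a, ha⟩ * ⟨b * γ⁻¹, hMem2 hb⟩) * cEl := by
            congr 2
            ext
            show a * b * γ⁻¹ = a * (b * γ⁻¹)
            rw [mul_assoc]
        _ = f ⟨a, ha⟩ * (f ⟨b * γ⁻¹, hMem2 hb⟩ * cEl) := by
            rw [_root_.map_mul, mul_assoc]
        _ = F a * F b := by rw [hFmem ha, hFnot hb]
    · have hab : a * b ∉ Γ := fun h => ha (((hIff a b).mp h).mpr hb)
      calc F (a * b) = f ⟨a * b * γ⁻¹, hMem2 hab⟩ * cEl := hFnot hab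
        _ = f (⟨a * γ⁻¹, hMem2 ha⟩ * ⟨γ * b * γ⁻¹, hconjmem ⟨b, hb⟩⟩) * cEl := by
            congr 2
            ext
            show a * b * γ⁻¹ = a * γ⁻¹ * (γ * b * γ⁻¹)
            group
        _ = f ⟨a * γ⁻¹, hMem2 ha⟩ * (f ⟨γ * b * γ⁻¹, hconjmem ⟨b, hb⟩⟩ * cEl) := by
            rw [_root_.map_mul, mul_assoc]
        _ = f ⟨a * γ⁻¹, hMem2 ha⟩ * (cEl * f ⟨b, hb⟩) := by rw [hA ⟨b, hb⟩]
        _ = F a * F b := by rw [hFnot ha, hFmem hb]; simp only [mul_assoc]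
    · have hab : a * b ∈ Γ := (hIff a b).mpr (iff_of_false ha hb)
      calc F (a * b) = f ⟨a * b, hab⟩ := hFmem hab
        _ = f (⟨a * γ⁻¹, hMem2 ha⟩ * ⟨γ * (b * γ⁻¹) * γ⁻¹, hconjmem ⟨b * γ⁻¹, hMem2 hb⟩⟩
              * ⟨γ * γ, hsqmem⟩) := by
            congr 1
            ext
            show a * b = a * γ⁻¹ * (γ * (b * γ⁻¹) * γ⁻¹) * (γ * γ)
            group
        _ = f ⟨a * γ⁻¹, hMem2 ha⟩ * f ⟨γ * (b * γ⁻¹) * γ⁻¹, hconjmem ⟨b * γ⁻¹, hMem2 hb⟩⟩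
              * (cEl * cEl) := by rw [_root_.map_mul, _root_.map_mul, hB]
        _ = f ⟨a * γ⁻¹, hMem2 ha⟩
              * ((f ⟨γ * (b * γ⁻¹) * γ⁻¹, hconjmem ⟨b * γ⁻¹, hMem2 hb⟩⟩ * cEl) * cEl) := by
            simp only [mul_assoc]
        _ = f ⟨a * γ⁻¹, hMem2 ha⟩ * ((cEl * f ⟨b * γ⁻¹, hMem2 hb⟩) * cEl) := by
            rw [hA ⟨b * γ⁻¹, hMem2 hb⟩]
        _ = F a * F b := by rw [hFnot ha, hFnot hb]; simp only [mul_assoc]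
  refine ⟨MonoidHom.mk' F hmul, ⟨?_, ?_⟩, ?_⟩
  · intro x
    show F (x : Γt) = _
    rw [hFmem x.2]
    rfl
  · show F γ = cEl
    rw [hFnot hγ]
    have h1 : (⟨γ * γ⁻¹, hMem2 hγ⟩ : Γ) = 1 := by
      ext
      simp
    rw [h1, _root_.map_one, one_mul]
  · rintro r ⟨hr1, hr2⟩
    refine MonoidHom.ext fun g => ?_
    show r g = F g
    by_cases h : g ∈ Γ
    · rw [hFmem h, hr1 ⟨g, h⟩]
      rfl
    · rw [hFnot h]
      have hg : g = (g * γ⁻¹) * γ := (inv_mul_cancel_right g γ).symm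
      calc r g = r ((g * γ⁻¹) * γ) := by rw [← hg]
        _ = r ((⟨g * γ⁻¹, hMem2 h⟩ : Γ) : Γt) * r γ := by rw [_root_.map_mul]
        _ = f ⟨g * γ⁻¹, hMem2 h⟩ * cEl := by rw [hr1, hr2]; rfl
end

section
/- Let K be an algebraically closed field, m ≥ 1 an integer, and q ≥ 2 an integer. Then there exists a finite set S of invertible m × m matrices over K such that every A ∈ GL_m(K) for which there exists some B ∈ GL_m(K) with B·A·B⁻¹ = A^q is conjugate in GL_m(K) to an element of S. In other words, the set {A ∈ GL_m(K) : ∃ B ∈ GL_m(K), BAB⁻¹ = A^q} meets only finitely many conjugacy classes of GL_m(K). -/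
open Polynomial Module DirectSum

universe u

set_option maxHeartbeats 1000000

/-- Drop subsingleton components from a finite product. -/
noncomputable def piSubtypeLinearEquiv (R : Type*) [Semiring R] {ι : Type*}
    (M : ι → Type*) [∀ i, AddCommMonoid (M i)] [∀ i, Module R (M i)]
    (P : ι → Prop) [DecidablePred P] (h : ∀ i, ¬ P i → Subsingleton (M i)) :
    (∀ i, M i) ≃ₗ[R] ∀ j : Subtype P, M j where
  toFun f := fun j => f j
  map_add' _ _ := rfl
  map_smul' _ _ := rfl
  invFun g := fun i => if hp : P i then g ⟨i, hp⟩ else 0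
  left_inv f := by
    funext i
    by_cases hp : P i
    · simp [hp]
    · have := h i hp
      exact Subsingleton.elim _ _
  right_inv g := by
    funext j
    simp [j.2]

/-- Drop subsingleton components from a finite direct sum. -/
noncomputable def directSumSubtypeLinearEquiv (R : Type*) [Semiring R] {ι : Type*}
    [Fintype ι] [DecidableEq ι]
    (M : ι → Type*) [∀ i, AddCommMonoid (M i)] [∀ i, Module R (M i)]
    (P : ι → Prop) [DecidablePred P] (h : ∀ i, ¬ P i → Subsingleton (M i)) :
    (⨁ i, M i) ≃ₗ[R] ⨁ j : Subtype P, M j :=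
  (linearEquivFunOnFintype R ι M).trans
    ((piSubtypeLinearEquiv R M P h).trans (linearEquivFunOnFintype R _ _).symm)

/-- Reindex a direct sum of cyclic quotient modules along a bijection preserving spans. -/
noncomputable def directSumQuotCongr {R : Type*} [CommRing R] {ι ι' : Type*}
    [DecidableEq ι] [DecidableEq ι'] (g : ι → R) (g' : ι' → R) (σ : ι ≃ ι')
    (hspan : ∀ i, (R ∙ g' (σ i)) = (R ∙ g i)) :
    (⨁ i, R ⧸ (R ∙ g i)) ≃ₗ[R] ⨁ i', R ⧸ (R ∙ g' i') :=
  (DFinsupp.mapRange.linearEquiv fun i =>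
      Submodule.quotEquivOfEq _ _ (hspan i).symm).trans
    ((DirectSum.lequivCongrLeft (M := fun i' => R ⧸ (R ∙ g' i')) R σ.symm).symm :
      (⨁ i, R ⧸ (R ∙ g' (σ i))) ≃ₗ[R] ⨁ i', R ⧸ (R ∙ g' i'))

section Field

variable {K : Type u} [Field K]

/-- If the `K[X]`-modules attached to two matrices are isomorphic, then the matrices are
conjugate. -/
lemma similar_of_aevalEquiv {m : ℕ} (A A' : Matrix (Fin m) (Fin m) K)
    (e : Module.AEval' (Matrix.toLin' A') ≃ₗ[K[X]] Module.AEval' (Matrix.toLin' A)) :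
    ∃ C : Matrix (Fin m) (Fin m) K, IsUnit C ∧ A = C * A' * C⁻¹ := by
  set f := Matrix.toLin' A with hf
  set f' := Matrix.toLin' A' with hf'
  let ε : (Fin m → K) ≃ₗ[K] (Fin m → K) :=
    (Module.AEval'.of f').trans ((e.restrictScalars K).trans (Module.AEval'.of f).symm)
  have key : ∀ x, ε (f' x) = f (ε x) := by
    intro x
    show (Module.AEval'.of f).symm (e (Module.AEval'.of f' (f' x)))
        = f ((Module.AEval'.of f).symm (e (Module.AEval'.of f' x)))
    rw [← Module.AEval'.X_smul_of, ← Module.AEval'.of_symm_X_smul]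
    congr 1
    exact map_smul e (X : K[X]) _
  have hcomp : (ε : (Fin m → K) →ₗ[K] (Fin m → K)) ∘ₗ f' = f ∘ₗ (ε : _ →ₗ[K] _) :=
    LinearMap.ext fun x => key x
  set C := LinearMap.toMatrix' (ε : (Fin m → K) →ₗ[K] (Fin m → K)) with hC
  set D := LinearMap.toMatrix' (ε.symm : (Fin m → K) →ₗ[K] (Fin m → K)) with hD
  have hCD : C * D = 1 := by
    rw [hC, hD, ← LinearMap.toMatrix'_comp]
    simp
  have hDC : D * C = 1 := by
    rw [hD, hC, ← LinearMap.toMatrix'_comp]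
    simp
  have hCunit : IsUnit C := ⟨⟨C, D, hCD, hDC⟩, rfl⟩
  have hCA : C * A' = A * C := by
    have := congrArg LinearMap.toMatrix' hcomp
    rwa [LinearMap.toMatrix'_comp, LinearMap.toMatrix'_comp, ← hC,
      hf, hf', LinearMap.toMatrix'_toLin', LinearMap.toMatrix'_toLin'] at this
  refine ⟨C, hCunit, ?_⟩
  have hdet : IsUnit C.det := (Matrix.isUnit_iff_isUnit_det C).mp hCunit
  calc A = A * (C * C⁻¹) := by rw [Matrix.mul_nonsing_inv C hdet, Matrix.mul_one]
    _ = (A * C) * C⁻¹ := by rw [Matrix.mul_assoc]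
    _ = C * A' * C⁻¹ := by rw [← hCA]

variable [IsAlgClosed K]

/-- Decomposition data for the `K[X]`-module attached to a matrix: a list of eigenvalues
(with `N`-th power one) and exponents, whose fiber-count function is `c`. -/
def MatData (m N : ℕ) (A : Matrix (Fin m) (Fin m) K) (c : K × ℕ → ℕ) : Prop :=
  ∃ (ι : Type u) (_ : Fintype ι) (lam : ι → K) (e : ι → ℕ),
    (∀ i, lam i ^ N = 1) ∧ (∀ i, 1 ≤ e i) ∧ (∑ i, e i = m) ∧
    (∀ lk : K × ℕ, c lk = Nat.card {i // (lam i, e i) = lk}) ∧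
    Nonempty (Module.AEval' (Matrix.toLin' A) ≃ₗ[K[X]]
      ⨁ i, K[X] ⧸ (K[X] ∙ ((X - C (lam i)) ^ (e i))))

/-- Structure theorem: every matrix has a decomposition into cyclic prime-power modules. -/
lemma exists_decomp (m : ℕ) (A : Matrix (Fin m) (Fin m) K) :
    ∃ (ι : Type u) (_ : Fintype ι) (lam : ι → K) (e : ι → ℕ),
      (∀ i, 1 ≤ e i) ∧ (∑ i, e i = m) ∧
      (∀ i, lam i ∈ spectrum K A) ∧
      Nonempty (Module.AEval' (Matrix.toLin' A) ≃ₗ[K[X]]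
        ⨁ i, K[X] ⧸ (K[X] ∙ ((X - C (lam i)) ^ (e i)))) := by
  classical
  set f := Matrix.toLin' A with hf
  set r := minpoly K f with hr
  have hr0 : r ≠ 0 := minpoly.ne_zero_of_finite K f
  have hann : ∀ y : Module.AEval' f, r • y = 0 := by
    intro y
    apply (Module.AEval'.of f).symm.injective
    rw [Module.AEval.of_symm_smul]
    simp [hr, minpoly.aeval]
  have htor : Module.IsTorsion K[X] (Module.AEval' f) := fun x =>
    ⟨⟨r, mem_nonZeroDivisors_of_ne_zero hr0⟩, hann x⟩
  obtain ⟨ι₀, hι₀, p, hp, e₀, ⟨h⟩⟩ := Module.equiv_directSum_of_isTorsion htor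
  have hdvd : ∀ i, p i ^ e₀ i ∣ r := by
    intro i
    have hx := hann (h.symm (DirectSum.lof K[X] ι₀
      (fun i => K[X] ⧸ (K[X] ∙ p i ^ e₀ i)) i (Submodule.Quotient.mk 1)))
    have h1 := congrArg h hx
    rw [map_smul, h.apply_symm_apply, map_zero, ← map_smul] at h1
    have h2 := congrArg (DirectSum.component K[X] ι₀ _ i) h1
    rw [DirectSum.component.lof_self, map_zero] at h2
    have h3 : (Submodule.Quotient.mk r : K[X] ⧸ (K[X] ∙ p i ^ e₀ i)) = 0 := by
      rwa [← Submodule.Quotient.mk_smul, smul_eq_mul, mul_one] at h2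
    rw [Submodule.Quotient.mk_eq_zero] at h3
    obtain ⟨c, hc⟩ := Submodule.mem_span_singleton.mp h3
    exact Dvd.intro_left c (by rw [← smul_eq_mul]; exact hc)
  let P : ι₀ → Prop := fun i => e₀ i ≠ 0
  have hsub : ∀ i, ¬ P i → Subsingleton (K[X] ⧸ (K[X] ∙ p i ^ e₀ i)) := by
    intro i hi
    rw [show P i ↔ e₀ i ≠ 0 from Iff.rfl, not_ne_iff] at hi
    have : (K[X] ∙ p i ^ e₀ i) = ⊤ := by
      rw [hi, pow_zero]
      exact Submodule.eq_top_iff'.mpr fun x => Submodule.mem_span_singleton.mpr ⟨x, by simp⟩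
    exact Submodule.Quotient.subsingleton_iff.mpr this
  let ι : Type u := Subtype P
  have h2 : Module.AEval' f ≃ₗ[K[X]] ⨁ j : ι, K[X] ⧸ (K[X] ∙ p j ^ e₀ j) :=
    h.trans (directSumSubtypeLinearEquiv K[X] _ P hsub)
  have hroot : ∀ j : ι, ∃ lam : K, IsRoot (p j) lam := by
    intro j
    refine IsAlgClosed.exists_root _ ?_
    rw [IsAlgClosed.degree_eq_one_of_irreducible K (hp j)]
    exact one_ne_zero
  choose lam hlam using hroot
  have hassoc : ∀ j : ι, Associated (X - C (lam j)) (p (j : ι₀)) := fun j =>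
    (irreducible_X_sub_C (lam j)).associated_of_dvd (hp j) (dvd_iff_isRoot.mpr (hlam j))
  have hspan : ∀ j : ι, (K[X] ∙ p (j : ι₀) ^ e₀ (j : ι₀))
      = (K[X] ∙ ((X - C (lam j)) ^ e₀ (j : ι₀))) := by
    intro j
    exact (Ideal.span_singleton_eq_span_singleton.mpr ((hassoc j).pow_pow).symm)
  have h3 : Module.AEval' f ≃ₗ[K[X]]
      ⨁ j : ι, K[X] ⧸ (K[X] ∙ ((X - C (lam j)) ^ e₀ (j : ι₀))) :=
    h2.trans (DFinsupp.mapRange.linearEquiv fun j =>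
      Submodule.quotEquivOfEq _ _ (hspan j))
  have hspec : ∀ j : ι, lam j ∈ spectrum K A := by
    intro j
    have hpe : p (j : ι₀) ∣ r := dvd_trans (dvd_pow_self _ j.2) (hdvd j)
    have hroot_r : IsRoot r (lam j) := (hlam j).dvd hpe
    have hev : Module.End.HasEigenvalue f (lam j) :=
      Module.End.hasEigenvalue_of_isRoot hroot_r
    have hmem : lam j ∈ spectrum K f := Module.End.hasEigenvalue_iff_mem_spectrum.mp hev
    have : f = Matrix.toLinAlgEquiv' A := by
      apply LinearMap.ext
      intro v
      rw [hf, Matrix.toLin'_apply, Matrix.toLinAlgEquiv'_apply]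
    rw [this] at hmem
    rwa [AlgEquiv.spectrum_eq Matrix.toLinAlgEquiv' A] at hmem
  have hfin : ∀ j : ι, Module.Finite K (K[X] ⧸ (K[X] ∙ ((X - C (lam j)) ^ e₀ (j : ι₀)))) := by
    intro j
    have hne : (X - C (lam j)) ^ e₀ (j : ι₀) ≠ 0 := pow_ne_zero _ (X_sub_C_ne_zero _)
    exact (AdjoinRoot.powerBasis hne).finite
  haveI := hfin
  have hdim : ∀ j : ι, Module.finrank K (K[X] ⧸ (K[X] ∙ ((X - C (lam j)) ^ e₀ (j : ι₀))))
      = e₀ (j : ι₀) := by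
    intro j
    have hne : (X - C (lam j)) ^ e₀ (j : ι₀) ≠ 0 := pow_ne_zero _ (X_sub_C_ne_zero _)
    have := (AdjoinRoot.powerBasis hne).finrank
    exact this.trans (by rw [AdjoinRoot.powerBasis_dim]; simp)
  have hsum : ∑ j : ι, e₀ (j : ι₀) = m := by
    have e1 : Module.finrank K (Module.AEval' f) = m := by
      rw [← (Module.AEval'.of f).finrank_eq, Module.finrank_fin_fun]
    have e2 : Module.finrank K (Module.AEval' f)
        = Module.finrank K (⨁ j : ι, K[X] ⧸ (K[X] ∙ ((X - C (lam j)) ^ e₀ (j : ι₀)))) :=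
      (h3.restrictScalars K).finrank_eq
    rw [e1] at e2
    rw [Module.finrank_directSum] at e2
    rw [Finset.sum_congr rfl (fun j _ => hdim j)] at e2
    exact e2.symm
  exact ⟨ι, inferInstance, lam, fun j => e₀ (j : ι₀),
    fun j => Nat.one_le_iff_ne_zero.mpr j.2, hsum, hspec, ⟨h3⟩⟩

/-- All eigenvalues of a matrix conjugate to its `q`-th power are `(q^(m!) - 1)`-th roots
of unity. -/
lemma spectrum_pow_one (m q : ℕ) (hm : 1 ≤ m) (hq : 2 ≤ q)
    (A B : Matrix (Fin m) (Fin m) K) (hB : IsUnit B) (hA : IsUnit A)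
    (hBA : B * A * B⁻¹ = A ^ q) :
    ∀ μ ∈ spectrum K A, μ ^ (q ^ Nat.factorial m - 1) = 1 := by
  classical
  haveI : Nonempty (Fin m) := ⟨⟨0, hm⟩⟩
  have hne : (spectrum K A).Nonempty :=
    spectrum.nonempty_of_isAlgClosed_of_finiteDimensional K A
  have hmap : spectrum K (A ^ q) = (fun μ => μ ^ q) '' spectrum K A := by
    have hXq : A ^ q = aeval A (X ^ q : K[X]) := by simp
    rw [hXq, spectrum.map_polynomial_aeval_of_nonempty A (X ^ q : K[X]) hne]
    simp
  have hconj : spectrum K (A ^ q) = spectrum K A := by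
    rw [← hBA]
    have hBu : B = (hB.unit : Matrix (Fin m) (Fin m) K) := rfl
    rw [hBu, ← Matrix.coe_units_inv]
    exact spectrum.units_conjugate
  have hEq : (fun μ => μ ^ q) '' spectrum K A = spectrum K A := by
    rw [← hmap, hconj]
  set E := spectrum K A with hE
  have hfin : E.Finite := Matrix.finite_spectrum A
  set f : (Fin m → K) →ₗ[K] (Fin m → K) := Matrix.toLinAlgEquiv' A with hfdef
  have hspecf : spectrum K f = E := AlgEquiv.spectrum_eq Matrix.toLinAlgEquiv' A
  have hsubroots : ∀ μ ∈ E, μ ∈ (minpoly K f).roots.toFinset := by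
    intro μ hμ
    rw [Multiset.mem_toFinset, mem_roots (minpoly.ne_zero_of_finite K f)]
    have : μ ∈ spectrum K f := by rw [hspecf]; exact hμ
    exact Module.End.isRoot_of_hasEigenvalue (Module.End.HasEigenvalue.of_mem_spectrum this)
  have hcard : hfin.toFinset.card ≤ m := by
    have h1 : hfin.toFinset ⊆ (minpoly K f).roots.toFinset := by
      intro μ hμ
      exact hsubroots μ (hfin.mem_toFinset.mp hμ)
    calc hfin.toFinset.card ≤ (minpoly K f).roots.toFinset.card := Finset.card_le_card h1
      _ ≤ Multiset.card (minpoly K f).roots := Multiset.toFinset_card_le _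
      _ ≤ (minpoly K f).natDegree := card_roots' _
      _ ≤ (LinearMap.charpoly f).natDegree := by
          exact Polynomial.natDegree_le_of_dvd (LinearMap.minpoly_dvd_charpoly f)
            (LinearMap.charpoly_monic f).ne_zero
      _ = m := by rw [LinearMap.charpoly_natDegree, Module.finrank_fin_fun]
  have hmemE : ∀ μ ∈ E, μ ^ q ∈ E := by
    intro μ hμ
    rw [← hEq]
    exact ⟨μ, hμ, rfl⟩
  haveI : Finite E := hfin.to_subtype
  set g : E → E := fun μ => ⟨(μ : K) ^ q, hmemE μ μ.2⟩ with hg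
  have hgsurj : Function.Surjective g := by
    rintro ⟨μ, hμ⟩
    rw [← hEq] at hμ
    obtain ⟨ν, hν, hνq⟩ := hμ
    exact ⟨⟨ν, hν⟩, Subtype.ext hνq⟩
  have hginj : Function.Injective g := (Finite.injective_iff_surjective).mpr hgsurj
  have hgiter : ∀ (j : ℕ) (x : E), g^[j] x = ⟨(x : K) ^ (q ^ j), by
      induction j with
      | zero => simpa using x.2
      | succ j ih => rw [pow_succ, pow_mul]; exact hmemE _ ih⟩ := by
    intro j
    induction j with
    | zero => intro x; simp
    | succ j ih =>
      intro x
      rw [Function.iterate_succ_apply', ih x]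
      apply Subtype.ext
      show ((x : K) ^ (q ^ j)) ^ q = (x : K) ^ (q ^ (j + 1))
      rw [pow_succ, pow_mul]
  intro μ hμ
  set n := hfin.toFinset.card with hn
  have hiterE : ∀ j : ℕ, μ ^ (q ^ j) ∈ E := by
    intro j
    induction j with
    | zero => simpa using hμ
    | succ j ih => rw [pow_succ, pow_mul]; exact hmemE _ ih
  have hmaps : ∀ j : Fin (n + 1), μ ^ (q ^ (j : ℕ)) ∈ hfin.toFinset := by
    intro j
    exact hfin.mem_toFinset.mpr (hiterE j)
  have main : ∀ a b : ℕ, a < b → b ≤ n → μ ^ (q ^ a) = μ ^ (q ^ b) →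
      μ ^ (q ^ Nat.factorial m - 1) = 1 := by
    intro a b ha hbn habeq
    have key : μ ^ (q ^ (b - a)) = μ := by
      have h1 : g^[a] ⟨μ ^ (q ^ (b - a)), hiterE _⟩ = g^[a] ⟨μ, hμ⟩ := by
        rw [hgiter, hgiter]
        apply Subtype.ext
        show (μ ^ q ^ (b - a)) ^ q ^ a = μ ^ q ^ a
        rw [← pow_mul, ← pow_add, Nat.sub_add_cancel (le_of_lt ha)]
        exact habeq.symm
      have := hginj.iterate a h1
      exact congrArg Subtype.val this
    have hd1 : 1 ≤ b - a := Nat.sub_pos_of_lt ha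
    have hdm : b - a ≤ m := by omega
    have hμ0 : μ ≠ 0 := by
      intro h0
      rw [h0] at hμ
      exact (spectrum.zero_notMem_iff K).mpr hA hμ
    set d := b - a with hdd
    have hqd : μ ^ (q ^ d - 1) = 1 := by
      have h2 : μ ^ (q ^ d - 1) * μ = 1 * μ := by
        rw [one_mul, ← pow_succ]
        rw [show q ^ d - 1 + 1 = q ^ d by
          have : 1 ≤ q ^ d := Nat.one_le_pow _ _ (by omega)
          omega]
        exact key
      exact mul_right_cancel₀ hμ0 h2
    have hdvd : q ^ d - 1 ∣ q ^ Nat.factorial m - 1 := by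
      obtain ⟨k, hk⟩ := Nat.dvd_factorial (by omega : 0 < d) hdm
      rw [hk, pow_mul]
      simpa using Nat.sub_dvd_pow_sub_pow (q ^ d) 1 k
    obtain ⟨t, ht⟩ := hdvd
    rw [ht, pow_mul, hqd, one_pow]
  obtain ⟨a, -, b, -, hab, habeq⟩ :=
    Finset.exists_ne_map_eq_of_card_lt_of_maps_to
      (by rw [Finset.card_univ, Fintype.card_fin]; exact Nat.lt_succ_self n)
      (fun j (_ : j ∈ (Finset.univ : Finset (Fin (n + 1)))) => hmaps j)
  rcases Ne.lt_or_gt hab with hlt | hlt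
  · exact main a b (by exact_mod_cast hlt) (Nat.lt_succ_iff.mp b.2) habeq
  · exact main b a (by exact_mod_cast hlt) (Nat.lt_succ_iff.mp a.2) habeq.symm

/-- Two matrices with the same decomposition data are conjugate. -/
lemma similar_of_matData {m N : ℕ} (A A' : Matrix (Fin m) (Fin m) K)
    (c : K × ℕ → ℕ) (hA : MatData m N A c) (hA' : MatData m N A' c) :
    ∃ C : Matrix (Fin m) (Fin m) K, IsUnit C ∧ A = C * A' * C⁻¹ := by
  classical
  obtain ⟨ι, hι, lam, e, -, -, -, hc, ⟨hiso⟩⟩ := hA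
  obtain ⟨ι', hι', lam', e', -, -, -, hc', ⟨hiso'⟩⟩ := hA'
  -- build the bijection from fiber counts
  have hfib : ∀ lk : K × ℕ,
      { i : ι // (fun i => (lam i, e i)) i = lk } ≃
      { i' : ι' // (fun i' => (lam' i', e' i')) i' = lk } := by
    intro lk
    apply Fintype.equivOfCardEq
    have h1 := (hc lk).symm.trans (hc' lk)
    rwa [Nat.card_eq_fintype_card, Nat.card_eq_fintype_card] at h1
  let σ : ι ≃ ι' := Equiv.ofFiberEquiv hfib
  have hσ : ∀ i, (lam' (σ i), e' (σ i)) = (lam i, e i) := fun i =>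
    Equiv.ofFiberEquiv_map hfib i
  have hσ1 : ∀ i, lam' (σ i) = lam i := fun i => congrArg Prod.fst (hσ i)
  have hσ2 : ∀ i, e' (σ i) = e i := fun i => congrArg Prod.snd (hσ i)
  have hspan : ∀ i : ι, (K[X] ∙ ((X - C (lam' (σ i))) ^ (e' (σ i))))
      = (K[X] ∙ ((X - C (lam i)) ^ (e i))) := by
    intro i
    rw [hσ1 i, hσ2 i]
  have cong := directSumQuotCongr (fun i => (X - C (lam i)) ^ (e i))
    (fun i' => (X - C (lam' i')) ^ (e' i')) σ hspan
  exact similar_of_aevalEquiv A A' (hiso'.trans (cong.symm.trans hiso.symm))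

/-- Finiteness of the set of possible decomposition data. -/
lemma matData_finite (m N : ℕ) (hN : 1 ≤ N) :
    {c : K × ℕ → ℕ | ∃ A : Matrix (Fin m) (Fin m) K, MatData m N A c}.Finite := by
  classical
  -- roots of unity form a finite set
  have hroots : {x : K | x ^ N = 1}.Finite := by
    have hp0 : (X ^ N - Polynomial.C 1 : K[X]) ≠ 0 :=
      X_pow_sub_C_ne_zero (by omega) 1
    apply Set.Finite.subset (Set.finite_coe_iff.mp
      (Set.finite_coe_iff.mpr ((X ^ N - Polynomial.C 1 : K[X]).roots.toFinset : Finset K).finite_toSet))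
    intro x hx
    simp only [Finset.coe_sort_coe, Finset.mem_coe, Multiset.mem_toFinset]
    rw [mem_roots hp0]
    have : x ^ N = 1 := hx
    simp [IsRoot, this]
  set T : Set (K × ℕ) := {x : K | x ^ N = 1} ×ˢ Set.Icc 1 m with hT
  have hTfin : T.Finite := Set.Finite.prod hroots (Set.finite_Icc 1 m)
  -- data functions are supported on T with values ≤ m
  have hbound : ∀ c ∈ {c : K × ℕ → ℕ | ∃ A : Matrix (Fin m) (Fin m) K, MatData m N A c},
      (∀ lk, c lk ≤ m) ∧ (∀ lk, c lk ≠ 0 → lk ∈ T) := by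
    rintro c ⟨A, ι, hι, lam, e, hroot, h1e, hsum, hc, -⟩
    have hem : ∀ i, e i ≤ m := by
      intro i
      rw [← hsum]
      exact Finset.single_le_sum (fun j _ => Nat.zero_le (e j)) (Finset.mem_univ i)
    have hcardι : Fintype.card ι ≤ m := by
      calc Fintype.card ι = ∑ _i : ι, 1 := by simp
        _ ≤ ∑ i, e i := Finset.sum_le_sum fun i _ => h1e i
        _ = m := hsum
    constructor
    · intro lk
      rw [hc lk, Nat.card_eq_fintype_card]
      exact le_trans (Fintype.card_subtype_le _) hcardι
    · intro lk hlk
      rw [hc lk, Nat.card_eq_fintype_card] at hlk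
      have : Nonempty {i : ι // (lam i, e i) = lk} := by
        rw [← Fintype.card_pos_iff]
        omega
      obtain ⟨⟨i, hi⟩⟩ := this
      rw [← hi]
      exact ⟨hroot i, h1e i, hem i⟩
  -- conclude finiteness by injecting into functions on a finite set
  have : Finite ↥{c : K × ℕ → ℕ | ∃ A : Matrix (Fin m) (Fin m) K, MatData m N A c} := by
    haveI : Finite ↥T := hTfin.to_subtype
    apply Finite.of_injective (fun c => (fun t : T => (⟨c.1 t.1, by
      have := (hbound c.1 c.2).1 t.1
      omega⟩ : Fin (m + 1))))
    intro c c' hcc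
    apply Subtype.ext
    funext lk
    by_cases hlk : lk ∈ T
    · have := congrFun hcc ⟨lk, hlk⟩
      simpa [Fin.mk.injEq] using this
    · have h1 : c.1 lk = 0 := by
        by_contra h
        exact hlk ((hbound c.1 c.2).2 lk h)
      have h2 : c'.1 lk = 0 := by
        by_contra h
        exact hlk ((hbound c'.1 c'.2).2 lk h)
      rw [h1, h2]
  exact Set.finite_coe_iff.mp this

end Field

/-- over an algebraically closed field `K`, for `m ≥ 1` and `q ≥ 2`, the set
of invertible `m × m` matrices `A` admitting some invertible `B` with `B·A·B⁻¹ = A^q` meets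
only finitely many conjugacy classes of `GL_m(K)`: there is a finite set `S` of invertible
matrices such that every such `A` is conjugate to an element of `S`. -/
theorem statement6 {K : Type*} [Field K] [IsAlgClosed K] (m q : ℕ) (hm : 1 ≤ m) (hq : 2 ≤ q) :
    ∃ S : Finset (Matrix (Fin m) (Fin m) K),
      (∀ A ∈ S, IsUnit A) ∧
      ∀ A : Matrix (Fin m) (Fin m) K, IsUnit A →
        (∃ B : Matrix (Fin m) (Fin m) K, IsUnit B ∧ B * A * B⁻¹ = A ^ q) →
        ∃ A' ∈ S, ∃ C : Matrix (Fin m) (Fin m) K, IsUnit C ∧ A = C * A' * C⁻¹ := by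
  classical
  set N := q ^ Nat.factorial m - 1 with hN
  have hN1 : 1 ≤ N := by
    have h2 : 2 ≤ q ^ Nat.factorial m := by
      calc 2 = 2 ^ 1 := by norm_num
        _ ≤ q ^ 1 := by exact Nat.pow_le_pow_left hq 1
        _ ≤ q ^ Nat.factorial m := Nat.pow_le_pow_right (by omega) (Nat.one_le_iff_ne_zero.mpr
            (Nat.factorial_ne_zero m))
    omega
  -- the predicate we care about
  set Good : Matrix (Fin m) (Fin m) K → Prop := fun A =>
    IsUnit A ∧ ∃ B : Matrix (Fin m) (Fin m) K, IsUnit B ∧ B * A * B⁻¹ = A ^ q with hGood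
  -- every good matrix has data
  have hdata : ∀ A, Good A → ∃ c : K × ℕ → ℕ, MatData m N A c := by
    rintro A ⟨hA, B, hB, hBA⟩
    obtain ⟨ι, hι, lam, e, h1e, hsum, hspec, hiso⟩ := exists_decomp m A
    refine ⟨fun lk => Nat.card {i : ι // (lam i, e i) = lk}, ι, hι, lam, e, ?_, h1e, hsum,
      fun lk => rfl, hiso⟩
    intro i
    exact spectrum_pow_one m q hm hq A B hB hA hBA (lam i) (hspec i)
  -- the achieved data set is finite
  set DS : Set (K × ℕ → ℕ) := {c | ∃ A, Good A ∧ MatData m N A c} with hDS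
  have hDSfin : DS.Finite := by
    apply Set.Finite.subset (matData_finite m N hN1)
    rintro c ⟨A, -, hc⟩
    exact ⟨A, hc⟩
  -- choose representatives
  have hrep : ∀ c ∈ DS, ∃ A, Good A ∧ MatData m N A c := fun c hc => hc
  choose rep hrepGood hrepData using hrep
  set S : Finset (Matrix (Fin m) (Fin m) K) :=
    hDSfin.toFinset.attach.image (fun c => rep c.1 (hDSfin.mem_toFinset.mp c.2)) with hS
  refine ⟨S, ?_, ?_⟩
  · intro A' hA'
    rw [hS, Finset.mem_image] at hA'
    obtain ⟨⟨c, hc⟩, -, hcA'⟩ := hA'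
    rw [← hcA']
    exact (hrepGood c (hDSfin.mem_toFinset.mp hc)).1
  · intro A hA hB
    have hGoodA : Good A := ⟨hA, hB⟩
    obtain ⟨c, hc⟩ := hdata A hGoodA
    have hcDS : c ∈ DS := ⟨A, hGoodA, hc⟩
    have hcmem : c ∈ hDSfin.toFinset := hDSfin.mem_toFinset.mpr hcDS
    set A' := rep c (hDSfin.mem_toFinset.mp hcmem) with hA'
    have hA'S : A' ∈ S := by
      rw [hS, Finset.mem_image]
      exact ⟨⟨c, hcmem⟩, Finset.mem_attach _ _, rfl⟩
    obtain ⟨C, hC, hsim⟩ := similar_of_matData A A' c hc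
      (hrepData c (hDSfin.mem_toFinset.mp hcmem))
    exact ⟨A', hA'S, C, hC, hsim⟩
end

section
/- Let k be an algebraically closed field of characteristic ℓ > 0, and let N, a, n be positive integers with n coprime to ℓ. Let T, Φ ∈ GL_N(k) satisfy Φ·T·Φ⁻¹ = T^(ℓ^a) and T^n = 1. Then there exist a positive integer m and an invertible matrix P ∈ GL_N(k) such that both P·T·P⁻¹ and P·Φ^m·P⁻¹ are diagonal matrices. -/
open Polynomial Module

/-- cf. Lemma 4.2.2 of the paper: let `k` be an algebraically closed field
of characteristic `ℓ > 0`, and `N, a, n` positive integers with `n` coprime to `ℓ`.  If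
`T, Φ ∈ GL_N(k)` satisfy `Φ·T·Φ⁻¹ = T^(ℓ^a)` and `T^n = 1`, then there are a positive
integer `m` and an invertible matrix `P` such that `P·T·P⁻¹` and `P·Φ^m·P⁻¹` are both
diagonal. -/
theorem statement7 {k : Type*} [Field k] [IsAlgClosed k] (ℓ : ℕ) (hℓ : 0 < ℓ) [CharP k ℓ]
    (N a n : ℕ) (hN : 0 < N) (ha : 0 < a) (hn : 0 < n) (hcop : Nat.Coprime n ℓ)
    (T Φ : Matrix (Fin N) (Fin N) k) (hT : IsUnit T) (hΦ : IsUnit Φ)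
    (hrel : Φ * T * Φ⁻¹ = T ^ (ℓ ^ a)) (hTn : T ^ n = 1) :
    ∃ m : ℕ, 0 < m ∧ ∃ P : Matrix (Fin N) (Fin N) k, IsUnit P ∧
      (P * T * P⁻¹).IsDiag ∧ (P * Φ ^ m * P⁻¹).IsDiag := by
  classical
  haveI : NeZero ℓ := ⟨hℓ.ne'⟩
  have hp : Nat.Prime ℓ := (CharP.char_is_prime_of_pos k ℓ).out
  haveI : Fact (Nat.Prime ℓ) := ⟨hp⟩
  haveI : CharP k[X] ℓ := charP_of_injective_ringHom (Polynomial.C_injective) ℓ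
  haveI : NeZero n := ⟨hn.ne'⟩
  have hΦd : IsUnit Φ.det := (Matrix.isUnit_iff_isUnit_det Φ).mp hΦ
  -- Step 1: choose m with ℓ^(a*m) ≡ 1 mod n
  set u : (ZMod n)ˣ := (ZMod.unitOfCoprime ℓ hcop.symm) ^ a with hu
  set m := orderOf u with hm
  have hm0 : 0 < m := orderOf_pos u
  have hmod : ℓ ^ (a * m) ≡ 1 [MOD n] := by
    have h1 : ((ℓ ^ (a * m) : ℕ) : ZMod n) = ((1 : ℕ) : ZMod n) := by
      push_cast
      have h2 : ((u ^ m : (ZMod n)ˣ) : ZMod n) = 1 := by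
        rw [pow_orderOf_eq_one u, Units.val_one]
      calc (ℓ : ZMod n) ^ (a * m) = ((ZMod.unitOfCoprime ℓ hcop.symm : (ZMod n)ˣ) : ZMod n) ^ (a * m) := by
            rw [ZMod.coe_unitOfCoprime]
        _ = ((u ^ m : (ZMod n)ˣ) : ZMod n) := by
            rw [hu, ← pow_mul]; push_cast; ring
        _ = 1 := h2
    exact (ZMod.natCast_eq_natCast_iff _ _ _).mp h1
  have h1le : 1 ≤ ℓ ^ (a * m) := Nat.one_le_pow _ _ hℓ
  obtain ⟨t, ht⟩ := (Nat.modEq_iff_dvd' h1le).mp hmod.symm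
  have hexp : ℓ ^ (a * m) = n * t + 1 := by omega
  have hTpow : T ^ ℓ ^ (a * m) = T := by
    rw [hexp, pow_add, pow_mul, hTn, one_pow, one_mul, pow_one]
  -- Step 2: Φ^m commutes with T
  have base : ∀ s : ℕ, Φ * T ^ s = T ^ (ℓ ^ a * s) * Φ := by
    have b1 : Φ * T = T ^ ℓ ^ a * Φ := by
      rw [← hrel, mul_assoc, Matrix.nonsing_inv_mul Φ hΦd, mul_one]
    intro s
    induction s with
    | zero => simp
    | succ s ih =>
        rw [pow_succ, ← mul_assoc, ih, mul_assoc, b1, ← mul_assoc, ← pow_add,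
          Nat.mul_succ]
  have key : ∀ j s : ℕ, Φ ^ j * T ^ s = T ^ (s * ℓ ^ (a * j)) * Φ ^ j := by
    intro j
    induction j with
    | zero => intro s; simp
    | succ j ih =>
        intro s
        have : Φ ^ (j + 1) * T ^ s = Φ ^ j * (Φ * T ^ s) := by
          rw [pow_succ, mul_assoc]
        rw [this, base s, ← mul_assoc, ih (ℓ ^ a * s), mul_assoc, ← pow_succ]
        congr 2
        rw [Nat.mul_succ, pow_add]
        ring
    -- exponent: ℓ^a * s * ℓ^(a*j) vs s * ℓ^(a*(j+1))
  have hAT : Φ ^ m * T = T * Φ ^ m := by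
    have := key m 1
    simpa [one_mul, pow_one, hTpow] using this
  -- Step 3: Ψ := (Φ^m)^(ℓ^N) is annihilated by a squarefree polynomial
  set q : ℕ := ℓ ^ N with hq
  have hNq : N ≤ q := (Nat.lt_pow_self (n := N) hp.one_lt).le
  set A : Matrix (Fin N) (Fin N) k := Φ ^ m with hA
  set Ψ : Matrix (Fin N) (Fin N) k := A ^ q with hΨ
  set cp : k[X] := A.charpoly with hcp
  have hmonic : cp.Monic := A.charpoly_monic
  have hdeg : cp.natDegree = N := by rw [hcp, A.charpoly_natDegree_eq_dim, Fintype.card_fin]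
  have hsplit : cp.Splits := IsAlgClosed.splits cp
  have heq : cp = (cp.roots.map fun r => X - C r).prod :=
    hsplit.eq_prod_roots_of_monic hmonic
  set S : Finset k := cp.roots.toFinset with hS
  have hdvd : cp ∣ ∏ r ∈ S, (X - C r) ^ q := by
    rw [heq, Finset.prod_multiset_map_count]
    refine Finset.prod_dvd_prod_of_dvd _ _ fun r _ => pow_dvd_pow _ ?_
    exact le_trans (le_trans (Multiset.count_le_card _ _) (le_trans cp.card_roots' hdeg.le)) hNq
  have hannA : aeval A (∏ r ∈ S, (X - C r) ^ q) = 0 := by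
    obtain ⟨w, hw⟩ := hdvd
    rw [hw, map_mul, hcp, Matrix.aeval_self_charpoly, zero_mul]
  set p : k[X] := ∏ r ∈ S, (X - C (r ^ q)) with hpdef
  have hfact : ∀ r : k, (X - C r) ^ q = X ^ q - C (r ^ q) := by
    intro r
    rw [hq, sub_pow_char_pow, ← map_pow]
  have hexpand : Polynomial.expand k q p = ∏ r ∈ S, (X - C r) ^ q := by
    rw [hpdef, map_prod]
    refine Finset.prod_congr rfl fun r _ => ?_
    rw [map_sub, Polynomial.expand_X, Polynomial.expand_C, hfact r]
  have hannΨ : aeval Ψ p = 0 := by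
    have h3 := Polynomial.expand_aeval q p A
    rw [hexpand, hannA] at h3
    rw [hΨ, ← h3]
  have hqinj : ∀ x y : k, x ^ q = y ^ q → x = y := by
    intro x y hxy
    have : (x - y) ^ q = 0 := by rw [hq, sub_pow_char_pow, ← hq, hxy, sub_self]
    have h4 := pow_eq_zero_iff (n := q) (by positivity) |>.mp this
    exact sub_eq_zero.mp h4
  have hpsq : Squarefree p := by
    refine Separable.squarefree ?_
    rw [hpdef]
    exact separable_prod_X_sub_C_iff'.mpr fun x _ y _ hxy => hqinj x y hxy
  -- T is annihilated by squarefree X^n - 1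
  have hnk : (n : k) ≠ 0 := by
    intro h
    exact (hp.coprime_iff_not_dvd.mp hcop.symm) ((CharP.cast_eq_zero_iff k ℓ n).mp h)
  have hTsq : Squarefree ((X : k[X]) ^ n - 1) := by
    have := Polynomial.separable_X_pow_sub_C (1 : k) hnk one_ne_zero
    rw [map_one] at this
    exact this.squarefree
  have hannT : aeval T ((X : k[X]) ^ n - 1) = 0 := by
    rw [map_sub, map_pow, aeval_X, map_one, hTn, sub_self]
  -- pass to endomorphisms
  set E := Matrix.toLinAlgEquiv' (R := k) (n := Fin N) with hE
  set f : Module.End k (Fin N → k) := E T with hfdef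
  set g : Module.End k (Fin N → k) := E Ψ with hgdef
  have haef : aeval f ((X : k[X]) ^ n - 1) = 0 := by
    rw [hfdef, show E T = E.toAlgHom T from rfl, aeval_algHom_apply, hannT, map_zero]
  have haeg : aeval g p = 0 := by
    rw [hgdef, show E Ψ = E.toAlgHom Ψ from rfl, aeval_algHom_apply, hannΨ, map_zero]
  have hfss : f.IsSemisimple := Module.End.isSemisimple_of_squarefree_aeval_eq_zero hTsq haef
  have hgss : g.IsSemisimple := Module.End.isSemisimple_of_squarefree_aeval_eq_zero hpsq haeg
  have hTΨ : T * Ψ = Ψ * T := by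
    have h1 : Commute A T := hAT
    exact ((h1.pow_left q).symm).eq
  have hcfg : Commute f g := by
    show f * g = g * f
    rw [hfdef, hgdef, ← map_mul, ← map_mul, hTΨ]
  -- simultaneous triangularization
  set F : Fin 2 → Module.End k (Fin N → k) := ![f, g] with hF
  have hpair : Pairwise fun i j => Commute (F i) (F j) := by
    intro i j _
    fin_cases i <;> fin_cases j <;>
      first
        | exact Commute.refl _
        | exact hcfg
        | exact hcfg.symm
  have hsup : ⨆ χ : Fin 2 → k, ⨅ i, (F i).maxGenEigenspace (χ i) = ⊤ :=
    Module.End.iSup_iInf_maxGenEigenspace_eq_top_of_iSup_maxGenEigenspace_eq_top_of_commute F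
      hpair fun i => Module.End.iSup_maxGenEigenspace_eq_top _
  set EV : Set (Fin N → k) :=
    ⋃ χ : Fin 2 → k, ((⨅ i, (F i).maxGenEigenspace (χ i) : Submodule k (Fin N → k)) : Set (Fin N → k)) with hEV
  have hspan : Submodule.span k EV = ⊤ := by
    rw [eq_top_iff, ← hsup]
    refine iSup_le fun χ => ?_
    rw [← Submodule.span_eq (⨅ i, (F i).maxGenEigenspace (χ i))]
    refine Submodule.span_mono ?_
    rw [hEV]
    exact Set.subset_iUnion
      (fun χ : Fin 2 → k =>
        ((⨅ i, (F i).maxGenEigenspace (χ i) : Submodule k (Fin N → k)) : Set (Fin N → k))) χ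
  obtain ⟨b, hbEV, hbspan, hbli⟩ := exists_linearIndependent k EV
  have hbtop : ⊤ ≤ Submodule.span k (Set.range ((↑) : b → Fin N → k)) := by
    rw [Subtype.range_coe, hbspan, hspan]
  set B : Basis b k (Fin N → k) := Basis.mk hbli hbtop with hB
  set e : b ≃ Fin N := B.indexEquiv (Pi.basisFun k (Fin N)) with he
  set c : Basis (Fin N) k (Fin N → k) := B.reindex e with hc
  have hcmem : ∀ j : Fin N, (c j : Fin N → k) ∈ EV := by
    intro j
    rw [hc, Basis.reindex_apply, hB, Basis.mk_apply]
    exact hbEV (e.symm j).2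
  have heig : ∀ j : Fin N, ∃ μν : k × k,
      T.mulVec (c j) = μν.1 • c j ∧ Ψ.mulVec (c j) = μν.2 • c j := by
    intro j
    obtain ⟨s, ⟨χ, rfl⟩, hmem⟩ := hcmem j
    have hmem' : ∀ i : Fin 2, c j ∈ (F i).maxGenEigenspace (χ i) := by
      have := hmem
      simp only [SetLike.mem_coe, Submodule.mem_iInf] at this ⊢
      exact this
    have h0 := hmem' 0
    have h1 := hmem' 1
    rw [show F 0 = f from rfl, hfss.isFinitelySemisimple.maxGenEigenspace_eq_eigenspace,
      Module.End.mem_eigenspace_iff] at h0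
    rw [show F 1 = g from rfl, hgss.isFinitelySemisimple.maxGenEigenspace_eq_eigenspace,
      Module.End.mem_eigenspace_iff] at h1
    refine ⟨(χ 0, χ 1), ?_, ?_⟩
    · rw [← h0, hfdef, hE, Matrix.toLinAlgEquiv'_apply]
    · rw [← h1, hgdef, hE, Matrix.toLinAlgEquiv'_apply]
  choose μν hμ hν using heig
  -- build the matrix
  set C : Matrix (Fin N) (Fin N) k := (Pi.basisFun k (Fin N)).toMatrix c with hC
  haveI : Invertible C := (Pi.basisFun k (Fin N)).invertibleToMatrix c
  have hCunit : IsUnit C := isUnit_of_invertible C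
  have hCdet : IsUnit C.det := (Matrix.isUnit_iff_isUnit_det C).mp hCunit
  have hCentry : ∀ i j, C i j = c j i := by
    intro i j
    rw [hC, Basis.toMatrix_apply, Pi.basisFun_repr]
  have hmulC : ∀ (M : Matrix (Fin N) (Fin N) k) (d : Fin N → k),
      (∀ j, M.mulVec (c j) = d j • c j) → M * C = C * Matrix.diagonal d := by
    intro M d hd
    ext i j
    rw [Matrix.mul_apply, Matrix.mul_diagonal, hCentry]
    have h5 : M.mulVec (c j) i = d j * c j i := by rw [hd j]; simp
    calc ∑ l, M i l * C l j = M.mulVec (c j) i := by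
          simp only [Matrix.mulVec, dotProduct, hCentry]
      _ = c j i * d j := by rw [h5, mul_comm]
  have hTC : T * C = C * Matrix.diagonal (fun j => (μν j).1) := hmulC _ _ fun j => hμ j
  have hΨC : Ψ * C = C * Matrix.diagonal (fun j => (μν j).2) := hmulC _ _ fun j => hν j
  refine ⟨m * q, by positivity, C⁻¹, ?_, ?_, ?_⟩
  · exact (Matrix.isUnit_iff_isUnit_det _).mpr (Matrix.isUnit_nonsing_inv_det C hCdet)
  · rw [Matrix.nonsing_inv_nonsing_inv C hCdet, mul_assoc, hTC, ← mul_assoc,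
      Matrix.nonsing_inv_mul C hCdet, one_mul]
    exact Matrix.isDiag_diagonal _
  · rw [Matrix.nonsing_inv_nonsing_inv C hCdet, pow_mul, ← hA, ← hΨ, mul_assoc, hΨC,
      ← mul_assoc, Matrix.nonsing_inv_mul C hCdet, one_mul]
    exact Matrix.isDiag_diagonal _
end

section
/- Let n ≥ 1 be an integer and R a commutative ring in which (n−1)! is invertible. For an n × n matrix X over R with X^n = 0, set exp(X) = Σ_{i=0}^{n−1} (i!)⁻¹·X^i, and for an n × n matrix A over R with (A−1)^n = 0, set log(A) = Σ_{i=1}^{n−1} (−1)^{i−1}·(i)⁻¹·(A−1)^i (using the inverses of i! and i in R, which exist for i ≤ n−1). Then: (1) for every X with X^n = 0 one has (exp(X) − 1)^n = 0; (2) for every A with (A−1)^n = 0 one has (log A)^n = 0; (3) log(exp X) = X for every X with X^n = 0; and (4) exp(log A) = A for every A with (A−1)^n = 0. In particular the truncated exponential is a bijection from {X ∈ M_n(R) : X^n = 0} onto {A ∈ M_n(R) : (A−1)^n = 0} with inverse the truncated logarithm. -/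
/-- The truncated exponential `exp X = Σ_{i=0}^{n-1} X^i / i!` of an `n × n` matrix. -/
noncomputable def truncExp {n : ℕ} {R : Type*} [CommRing R]
    (X : Matrix (Fin n) (Fin n) R) : Matrix (Fin n) (Fin n) R :=
  ∑ i ∈ Finset.range n, Ring.inverse ((Nat.factorial i : R)) • X ^ i

/-- The truncated logarithm `log A = Σ_{i=1}^{n-1} (-1)^(i-1) (A-1)^i / i` of an `n × n`
matrix. -/
noncomputable def truncLog {n : ℕ} {R : Type*} [CommRing R]
    (A : Matrix (Fin n) (Fin n) R) : Matrix (Fin n) (Fin n) R :=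
  ∑ i ∈ Finset.Ico 1 n, ((-1 : R) ^ (i - 1) * Ring.inverse ((i : R))) • (A - 1) ^ i

open Polynomial Finset
namespace S8
variable {n : ℕ} {R : Type*} [CommRing R]

theorem geom (f : R[X]) (m : ℕ) : (1 - f) * ∑ j ∈ range m, f ^ j = 1 - f ^ m := by
  linear_combination -geom_sum_mul f m

lemma aeval_poly (F : R[X]) (c : ℕ → R) (s : Finset ℕ) :
    aeval F (∑ i ∈ s, C (c i) * X ^ i) = ∑ i ∈ s, C (c i) * F ^ i := by
  simp [map_sum, map_mul, map_pow, aeval_C, aeval_X, algebraMap_eq]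

noncomputable def eP (n : ℕ) (R : Type*) [CommRing R] : R[X] :=
  ∑ i ∈ range n, C (Ring.inverse (i.factorial : R)) * X ^ i

noncomputable def lP (n : ℕ) (R : Type*) [CommRing R] : R[X] :=
  ∑ i ∈ Finset.Ico 1 n, C ((-1 : R) ^ (i - 1) * Ring.inverse (i : R)) * X ^ i

lemma eP_succ (hn : 1 ≤ n) :
    eP n R = eP (n - 1) R + C (Ring.inverse ((n - 1).factorial : R)) * X ^ (n - 1) := by
  conv_lhs => rw [eP, show n = (n - 1) + 1 from (Nat.succ_pred_eq_of_pos hn).symm,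
    Finset.sum_range_succ]
  rfl

lemma eP_eq_one_add (hn : 1 ≤ n) :
    eP n R = 1 + ∑ i ∈ Finset.Ico 1 n, C (Ring.inverse (i.factorial : R)) * X ^ i := by
  rw [eP, Finset.range_eq_Ico, Finset.sum_eq_sum_Ico_succ_bot hn]
  simp [Nat.factorial]

lemma X_dvd_eP_sub_one (hn : 1 ≤ n) : (X : R[X]) ∣ eP n R - 1 := by
  rw [eP_eq_one_add hn, add_sub_cancel_left]
  exact Finset.dvd_sum fun i hi => by
    obtain ⟨j, rfl⟩ := Nat.exists_eq_add_of_le (Finset.mem_Ico.1 hi).1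
    exact Dvd.dvd.mul_left (dvd_pow_self X (by omega)) _

lemma X_dvd_lP : (X : R[X]) ∣ lP n R := by
  exact Finset.dvd_sum fun i hi => by
    obtain ⟨j, rfl⟩ := Nat.exists_eq_add_of_le (Finset.mem_Ico.1 (by exact hi)).1
    exact Dvd.dvd.mul_left (dvd_pow_self X (by omega)) _

variable (hfac : IsUnit ((Nat.factorial (n - 1) : R)))
include hfac

lemma unit_fact {i : ℕ} (hi : i < n) : IsUnit ((i.factorial : R)) :=
  isUnit_of_dvd_unit (Nat.cast_dvd_cast (Nat.factorial_dvd_factorial (Nat.le_sub_one_of_lt hi))) hfac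

lemma unit_nat {i : ℕ} (h1 : 1 ≤ i) (hi : i < n) : IsUnit ((i : R)) :=
  isUnit_of_dvd_unit (Nat.cast_dvd_cast (Nat.dvd_factorial h1 (Nat.le_sub_one_of_lt hi))) hfac

lemma mul_inv_fact {i : ℕ} (h1 : 1 ≤ i) (hi : i < n) :
    Ring.inverse ((i.factorial : R)) * (i : R) = Ring.inverse (((i - 1).factorial : R)) := by
  have h : (i.factorial : R) = (i : R) * ((i - 1).factorial : R) := by
    rw [← Nat.cast_mul, ← Nat.succ_pred_eq_of_pos h1]
    simp [Nat.factorial_succ]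
  rw [h, Ring.mul_inverse_rev, mul_assoc, Ring.inverse_mul_cancel _ (unit_nat hfac h1 hi), mul_one]

lemma mul_inv_self {i : ℕ} (h1 : 1 ≤ i) (hi : i < n) :
    ((-1 : R) ^ (i - 1) * Ring.inverse (i : R)) * (i : R) = (-1 : R) ^ (i - 1) := by
  rw [mul_assoc, Ring.inverse_mul_cancel _ (unit_nat hfac h1 hi), mul_one]

lemma deriv_eP : derivative (eP n R) = eP (n - 1) R := by
  rcases Nat.eq_zero_or_pos n with rfl | hn
  · simp [eP]
  rw [eP, map_sum, Finset.range_eq_Ico, Finset.sum_eq_sum_Ico_succ_bot hn]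
  have h1 : ∀ i ∈ Finset.Ico 1 n,
      derivative (C (Ring.inverse (i.factorial : R)) * X ^ i)
        = C (Ring.inverse (((i - 1).factorial : R))) * X ^ (i - 1) := by
    intro i hi
    obtain ⟨hi1, hi2⟩ := Finset.mem_Ico.1 hi
    rw [derivative_C_mul, derivative_X_pow, ← mul_assoc, ← C_mul,
      mul_inv_fact hfac hi1 hi2]
  rw [Finset.sum_congr rfl h1, Finset.sum_Ico_eq_sum_range]
  simp only [Nat.add_sub_cancel_left, add_tsub_cancel_left]
  simp [eP]

-- Key lemma 1 : log(exp) ≡ X mod X^n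
lemma key1 (hn : 1 ≤ n) : (X : R[X]) ^ n ∣ aeval (eP n R - 1) (lP n R) - X := by
  set F : R[X] := eP n R - 1 with hF
  set q : R[X] := aeval F (lP n R) with hqdef
  set G : R[X] := ∑ j ∈ range (n - 1), (-F) ^ j with hG
  have hXF : (X : R[X]) ∣ F := X_dvd_eP_sub_one hn
  have hq : q = ∑ i ∈ Finset.Ico 1 n,
      C ((-1 : R) ^ (i - 1) * Ring.inverse (i : R)) * F ^ i := aeval_poly F _ _
  -- X divides q
  have hXq : (X : R[X]) ∣ q := by
    rw [hq]
    exact Finset.dvd_sum fun i hi => by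
      obtain ⟨j, rfl⟩ := Nat.exists_eq_add_of_le (Finset.mem_Ico.1 hi).1
      exact Dvd.dvd.mul_left (dvd_pow hXF (by omega)) _
  -- derivative of q
  have hdq : derivative q = G * eP (n - 1) R := by
    rw [hq, map_sum]
    have h1 : ∀ i ∈ Finset.Ico 1 n,
        derivative (C ((-1 : R) ^ (i - 1) * Ring.inverse (i : R)) * F ^ i)
          = (C ((-1 : R) ^ (i - 1)) * F ^ (i - 1)) * derivative F := by
      intro i hi
      obtain ⟨hi1, hi2⟩ := Finset.mem_Ico.1 hi
      rw [derivative_C_mul, derivative_pow, ← mul_assoc, ← mul_assoc, ← C_mul,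
        mul_inv_self hfac hi1 hi2]
    rw [Finset.sum_congr rfl h1, ← Finset.sum_mul]
    have hdF : derivative F = eP (n - 1) R := by
      rw [hF, derivative_sub, derivative_one, sub_zero, deriv_eP hfac]
    rw [hdF, hG]
    congr 1
    rw [Finset.sum_Ico_eq_sum_range]
    apply Finset.sum_congr rfl
    intro k _
    simp only [add_tsub_cancel_left]
    rw [neg_pow F, map_pow, map_neg, map_one]
  -- geometric series
  have hgeom : eP n R * G = 1 - (-F) ^ (n - 1) := by
    have h1 : eP n R = 1 - (-F) := by rw [hF]; ring
    rw [h1, hG]; exact geom (-F) (n - 1)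
  -- X^(n-1) divides derivative q - 1
  have hdvd : (X : R[X]) ^ (n - 1) ∣ derivative q - 1 := by
    have heq : derivative q - 1
        = -((-F) ^ (n - 1)) - G * (C (Ring.inverse ((n - 1).factorial : R)) * X ^ (n - 1)) := by
      rw [hdq]
      have heP : eP (n - 1) R
          = eP n R - C (Ring.inverse ((n - 1).factorial : R)) * X ^ (n - 1) := by
        rw [eP_succ hn]; ring
      rw [heP]
      linear_combination hgeom
    rw [heq]
    refine dvd_sub (dvd_neg.2 ?_) (Dvd.dvd.mul_left (Dvd.dvd.mul_left (dvd_refl _) _) _)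
    have : (X : R[X]) ^ (n - 1) ∣ F ^ (n - 1) := pow_dvd_pow_of_dvd hXF _
    rw [neg_pow F]
    exact Dvd.dvd.mul_left this _
  -- coefficients
  refine X_pow_dvd_iff.2 fun k hk => ?_
  rcases Nat.eq_zero_or_pos k with rfl | hk1
  · rw [coeff_sub, Polynomial.X_dvd_iff.1 hXq, coeff_X_zero, sub_zero]
  obtain ⟨j, rfl⟩ := Nat.exists_eq_add_of_le hk1
  have hj : j < n - 1 := by omega
  have hco := X_pow_dvd_iff.1 hdvd j hj
  rw [coeff_sub, coeff_derivative, sub_eq_zero] at hco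
  rcases Nat.eq_zero_or_pos j with rfl | hj1
  · simp only [coeff_one, if_pos rfl] at hco
    have : q.coeff 1 = 1 := by
      have := hco; push_cast at this; simpa using this
    rw [coeff_sub, show (1 : ℕ) + 0 = 1 from rfl, this, coeff_X_one, sub_self]
  · have h0 : q.coeff (j + 1) * ((j : R) + 1) = 0 := by
      rw [hco, coeff_one, if_neg (by omega)]
    have hu : IsUnit (((j + 1 : ℕ) : R)) := unit_nat hfac (by omega) (by omega)
    push_cast at hu
    have : q.coeff (j + 1) = 0 := by
      have h2 := congrArg (fun t => t * Ring.inverse ((j : R) + 1)) h0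
      simpa [mul_assoc, Ring.mul_inverse_cancel _ hu] using h2
    rw [coeff_sub, add_comm 1 j, this, coeff_X, if_neg (by omega), sub_zero]

lemma deriv_lP : derivative (lP n R) = ∑ j ∈ range (n - 1), (-X : R[X]) ^ j := by
  rw [lP, map_sum]
  have h1 : ∀ i ∈ Finset.Ico 1 n,
      derivative (C ((-1 : R) ^ (i - 1) * Ring.inverse (i : R)) * X ^ i)
        = C ((-1 : R) ^ (i - 1)) * X ^ (i - 1) := by
    intro i hi
    obtain ⟨hi1, hi2⟩ := Finset.mem_Ico.1 hi
    rw [derivative_C_mul, derivative_X_pow, ← mul_assoc, ← C_mul,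
      mul_inv_self hfac hi1 hi2]
  rw [Finset.sum_congr rfl h1, Finset.sum_Ico_eq_sum_range]
  apply Finset.sum_congr rfl
  intro k _
  simp only [add_tsub_cancel_left, one_pow, mul_one]
  rw [neg_pow (X : R[X]), map_pow, map_neg, map_one]

-- Key lemma 2 : exp(log) ≡ 1 + X mod X^n
lemma key2 (hn : 1 ≤ n) : (X : R[X]) ^ n ∣ aeval (lP n R) (eP n R) - (1 + X) := by
  set L : R[X] := lP n R with hL
  set p : R[X] := aeval L (eP n R) with hpdef
  set G : R[X] := ∑ j ∈ range (n - 1), (-X : R[X]) ^ j with hG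
  set a : R := Ring.inverse ((n - 1).factorial : R) with ha
  have hXL : (X : R[X]) ∣ L := X_dvd_lP
  have hp : p = ∑ i ∈ range n, C (Ring.inverse (i.factorial : R)) * L ^ i :=
    aeval_poly L _ _
  -- p - 1 is divisible by X
  have hp1 : p - 1 = ∑ i ∈ Finset.Ico 1 n, C (Ring.inverse (i.factorial : R)) * L ^ i := by
    rw [hp, Finset.range_eq_Ico, Finset.sum_eq_sum_Ico_succ_bot hn]
    simp [Nat.factorial]
  have hXp1 : (X : R[X]) ∣ p - 1 := by
    rw [hp1]
    exact Finset.dvd_sum fun i hi => by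
      obtain ⟨j, rfl⟩ := Nat.exists_eq_add_of_le (Finset.mem_Ico.1 hi).1
      exact Dvd.dvd.mul_left (dvd_pow hXL (by omega)) _
  -- geometric series
  have hgeom : (1 + X) * G = 1 - (-X : R[X]) ^ (n - 1) := by
    have h1 : (1 + X : R[X]) = 1 - (-X) := by ring
    rw [h1, hG]; exact geom (-X) (n - 1)
  -- derivative of p
  have hdp : derivative p = G * (p - C a * L ^ (n - 1)) := by
    rw [hp, map_sum, Finset.range_eq_Ico, Finset.sum_eq_sum_Ico_succ_bot hn]
    have h0 : derivative (C (Ring.inverse ((Nat.factorial 0 : ℕ) : R)) * L ^ 0) = 0 := by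
      simp
    rw [h0, zero_add]
    have h1 : ∀ i ∈ Finset.Ico 1 n,
        derivative (C (Ring.inverse (i.factorial : R)) * L ^ i)
          = (C (Ring.inverse (((i - 1).factorial : R))) * L ^ (i - 1)) * derivative L := by
      intro i hi
      obtain ⟨hi1, hi2⟩ := Finset.mem_Ico.1 hi
      rw [derivative_C_mul, derivative_pow, ← mul_assoc, ← mul_assoc, ← C_mul,
        mul_inv_fact hfac hi1 hi2]
    rw [Finset.sum_congr rfl h1, ← Finset.sum_mul]
    have hdL : derivative L = G := by rw [hL, deriv_lP hfac, hG]
    rw [hdL, mul_comm]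
    congr 1
    rw [Finset.sum_Ico_eq_sum_range]
    simp only [add_tsub_cancel_left]
    rw [← Finset.range_eq_Ico]
    have hsplit : (∑ x ∈ range n, C (Ring.inverse (x.factorial : R)) * L ^ x)
        = (∑ x ∈ range (n - 1), C (Ring.inverse (x.factorial : R)) * L ^ x)
          + C a * L ^ (n - 1) := by
      conv_lhs => rw [show n = (n - 1) + 1 from (Nat.succ_pred_eq_of_pos hn).symm]
      rw [Finset.sum_range_succ, ha]
    rw [hsplit]
    ring
  -- the ODE : X^(n-1) ∣ (1+X) * derivative r - r  where r = p - 1 - X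
  set r : R[X] := p - 1 - X with hr
  have hdr : derivative r = derivative p - 1 := by
    rw [hr]; simp
  have hkey : (X : R[X]) ^ (n - 1) ∣ (1 + X) * derivative r - r := by
    have heq : (1 + X) * derivative r - r
        = -(C a * L ^ (n - 1)) - (-X : R[X]) ^ (n - 1) * (p - C a * L ^ (n - 1)) := by
      rw [hdr, hdp, hr]
      linear_combination (p - C a * L ^ (n - 1)) * hgeom
    rw [heq]
    refine dvd_sub (dvd_neg.2 (Dvd.dvd.mul_left (pow_dvd_pow_of_dvd hXL _) _)) ?_
    refine Dvd.dvd.mul_right ?_ _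
    rw [neg_pow (X : R[X])]
    exact Dvd.dvd.mul_left (dvd_refl _) _
  -- r(0) = 0
  have hr0 : r.coeff 0 = 0 := by
    rw [hr]
    have : (p - 1).coeff 0 = 0 := Polynomial.X_dvd_iff.1 hXp1
    simp only [coeff_sub]
    simp only [coeff_sub] at this
    rw [show p.coeff 0 - (1 : R[X]).coeff 0 - X.coeff 0
        = (p.coeff 0 - (1:R[X]).coeff 0) - X.coeff 0 from rfl, this, coeff_X_zero, sub_zero]
  -- induction
  have hind : ∀ k, k < n → r.coeff k = 0 := by
    intro k
    induction k with
    | zero => intro _; exact hr0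
    | succ k ih =>
      intro hk
      have hik : r.coeff k = 0 := ih (by omega)
      have hco := X_pow_dvd_iff.1 hkey k (by omega)
      rw [add_mul, one_mul, coeff_sub, coeff_add, coeff_derivative] at hco
      have hXd : (X * derivative r).coeff k = 0 := by
        rcases Nat.eq_zero_or_pos k with rfl | hk1
        · rw [coeff_zero_eq_eval_zero]; simp
        · obtain ⟨m, rfl⟩ := Nat.exists_eq_add_of_le hk1
          rw [add_comm 1 m, coeff_X_mul, coeff_derivative]
          rw [show m + 1 = 1 + m from by omega, hik, zero_mul]
      rw [hXd, add_zero, hik, sub_zero] at hco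
      have hu : IsUnit (((k + 1 : ℕ) : R)) := unit_nat hfac (by omega) (by omega)
      push_cast at hu
      have h2 := congrArg (fun t => t * Ring.inverse ((k : R) + 1)) hco
      simpa [mul_assoc, Ring.mul_inverse_cancel _ hu] using h2
  refine X_pow_dvd_iff.2 fun k hk => ?_
  have h3 : (aeval (lP n R)) (eP n R) - (1 + X) = r := by
    rw [hr, hpdef]; ring
  rw [h3]
  exact hind k hk


omit hfac

lemma aeval_zero_of_dvd {A : Type*} [Ring A] [Algebra R A] {M : A}
    (hM : M ^ n = 0) {f : R[X]} (hf : (X : R[X]) ^ n ∣ f) : aeval M f = 0 := by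
  obtain ⟨g, rfl⟩ := hf
  rw [map_mul, map_pow, aeval_X, hM, zero_mul]

end S8

set_option maxHeartbeats 2000000 in
open S8 in
/-- for `n ≥ 1` and a commutative ring `R` in which `(n-1)!` is invertible,
the truncated exponential maps `{X : X^n = 0}` to `{A : (A-1)^n = 0}`, the truncated
logarithm maps `{A : (A-1)^n = 0}` to `{X : X^n = 0}`, and the two maps are mutually
inverse bijections between these sets. -/
theorem statement8 {n : ℕ} (hn : 1 ≤ n) {R : Type*} [CommRing R]
    (hfac : IsUnit ((Nat.factorial (n - 1) : R))) :
    (∀ X : Matrix (Fin n) (Fin n) R, X ^ n = 0 → (truncExp X - 1) ^ n = 0) ∧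
    (∀ A : Matrix (Fin n) (Fin n) R, (A - 1) ^ n = 0 → truncLog A ^ n = 0) ∧
    (∀ X : Matrix (Fin n) (Fin n) R, X ^ n = 0 → truncLog (truncExp X) = X) ∧
    (∀ A : Matrix (Fin n) (Fin n) R, (A - 1) ^ n = 0 → truncExp (truncLog A) = A) := by
  have hExp : ∀ M : Matrix (Fin n) (Fin n) R, truncExp M = aeval M (eP n R) := by
    intro M
    rw [truncExp, eP, map_sum]
    refine Finset.sum_congr rfl fun i _ => ?_
    rw [map_mul, aeval_C, map_pow, aeval_X, Algebra.smul_def]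
  have hLog : ∀ A : Matrix (Fin n) (Fin n) R, truncLog A = aeval (A - 1) (lP n R) := by
    intro A
    rw [truncLog, lP, map_sum]
    refine Finset.sum_congr rfl fun i _ => ?_
    rw [map_mul, aeval_C, map_pow, aeval_X, Algebra.smul_def]
  refine ⟨?_, ?_, ?_, ?_⟩
  · intro M hM
    have h1 : truncExp M - 1 = aeval M (eP n R - 1) := by
      rw [map_sub, map_one, hExp]
    rw [h1, ← map_pow]
    exact aeval_zero_of_dvd (A := Matrix (Fin n) (Fin n) R) hM
      (f := (eP n R - 1) ^ n) (pow_dvd_pow_of_dvd (X_dvd_eP_sub_one hn) n)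
  · intro A hA
    rw [hLog, ← map_pow]
    exact aeval_zero_of_dvd (A := Matrix (Fin n) (Fin n) R) hA
      (f := (lP n R) ^ n) (pow_dvd_pow_of_dvd X_dvd_lP n)
  · intro M hM
    have h1 : truncExp M - 1 = aeval M (eP n R - 1) := by
      rw [map_sub, map_one, hExp]
    rw [hLog, h1]
    have h2 : aeval ((aeval M) (eP n R - 1)) (lP n R)
        = aeval M (aeval (eP n R - 1) (lP n R)) := by
      rw [Polynomial.aeval_algHom (aeval M) (eP n R - 1)]; rfl
    rw [h2]
    have h3 := key1 hfac hn (R := R)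
    obtain ⟨g, hg⟩ := h3
    have h4 : aeval (eP n R - 1) (lP n R) = X + X ^ n * g := by
      linear_combination hg
    rw [h4, map_add, aeval_X, map_mul, map_pow, aeval_X, hM, zero_mul, add_zero]
  · intro A hA
    rw [hExp, hLog]
    have h2 : aeval ((aeval (A - 1)) (lP n R)) (eP n R)
        = aeval (A - 1) (aeval (lP n R) (eP n R)) := by
      rw [Polynomial.aeval_algHom (aeval (A - 1)) (lP n R)]; rfl
    rw [h2]
    have h3 := key2 hfac hn (R := R)
    obtain ⟨g, hg⟩ := h3
    have h4 : aeval (lP n R) (eP n R) = 1 + X + X ^ n * g := by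
      linear_combination hg
    rw [h4, map_add, map_add, map_one, aeval_X, map_mul, map_pow, aeval_X, hA, zero_mul,
      add_zero, add_comm, sub_add_cancel]
end

section
/- Let R be a commutative ring, q ∈ R a unit, and m ≥ 1 an integer. Let J ∈ M_m(R) be the standard nilpotent Jordan block, with entries J_{i,i+1} = 1 for 1 ≤ i ≤ m−1 and all other entries 0, and let A ∈ M_m(R) be the antidiagonal matrix with entries A_{i, m+1−i} = (−q)^(m−i) for 1 ≤ i ≤ m and all other entries 0. Then A is invertible and A · Jᵀ · A⁻¹ = −q · J, where Jᵀ is the transpose of J. (Equivalently, without assuming q a unit: A·Jᵀ = −q·(J·A).) -/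
private lemma sum_ite_fin {R : Type*} [CommRing R] {m : ℕ} (n : ℕ) (f : Fin m → R) :
    (∑ j : Fin m, if (j : ℕ) = n then f j else 0) = if h : n < m then f ⟨n, h⟩ else 0 := by
  split
  · rename_i h
    rw [Finset.sum_eq_single (⟨n, h⟩ : Fin m)]
    · simp
    · intro b _ hb
      rw [if_neg]
      simpa [Fin.ext_iff] using hb
    · simp
  · rename_i h
    apply Finset.sum_eq_zero
    intro j _
    rw [if_neg]
    intro hj
    exact h (hj ▸ j.isLt)

/-- let `R` be a commutative ring, `q ∈ R` a unit, and `m ≥ 1`.  Let `J` be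
the standard nilpotent Jordan block (`J_{i,i+1} = 1`, all other entries `0`) and `A` the
antidiagonal matrix with `A_{i, m+1-i} = (-q)^(m-i)` (indices `1 ≤ i ≤ m`; in the `0`-based
indexing below, `J i j = 1` iff `j = i+1` and `A i j = (-q)^(m-1-i)` iff `i + j = m-1`).
Then `A` is invertible, `A·Jᵀ·A⁻¹ = -q·J`, and (without using invertibility)
`A·Jᵀ = -q·(J·A)`. -/
theorem statement9 {R : Type*} [CommRing R] (q : R) (hq : IsUnit q) (m : ℕ) (hm : 1 ≤ m)
    (J A : Matrix (Fin m) (Fin m) R)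
    (hJ : J = Matrix.of fun (i j : Fin m) => if (j : ℕ) = (i : ℕ) + 1 then 1 else 0)
    (hA : A = Matrix.of fun (i j : Fin m) =>
      if (i : ℕ) + (j : ℕ) = m - 1 then (-q) ^ (m - 1 - (i : ℕ)) else 0) :
    IsUnit A ∧ A * J.transpose * A⁻¹ = -(q • J) ∧ A * J.transpose = -(q • (J * A)) := by
  have hnq : IsUnit (-q) := hq.neg
  set v : Rˣ := hnq.unit with hv
  have hvval : (v : R) = -q := hnq.unit_spec
  -- explicit inverse of A
  set B : Matrix (Fin m) (Fin m) R := Matrix.of fun (i j : Fin m) =>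
    if (i : ℕ) + (j : ℕ) = m - 1 then ((v⁻¹ : Rˣ) : R) ^ (m - 1 - (j : ℕ)) else 0 with hB
  have hAB : A * B = 1 := by
    ext i k
    rw [Matrix.mul_apply]
    have key : ∀ j : Fin m, A i j * B j k =
        if (j : ℕ) = m - 1 - (i : ℕ) then A i j * B j k else 0 := by
      intro j
      split
      · rfl
      · rename_i h
        rw [hA]
        simp only [Matrix.of_apply]
        rw [if_neg, zero_mul]
        intro hc
        exact h (by omega)
    rw [Finset.sum_congr rfl fun j _ => key j, sum_ite_fin]
    have hlt : m - 1 - (i : ℕ) < m := by omega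
    rw [dif_pos hlt, hA, hB]
    simp only [Matrix.of_apply]
    have hi : (i : ℕ) + (m - 1 - (i : ℕ)) = m - 1 := by omega
    rw [if_pos hi]
    by_cases hik : (m - 1 - (i : ℕ)) + (k : ℕ) = m - 1
    · have hikeq : i = k := by
        have := i.isLt; have := k.isLt
        apply Fin.ext; omega
      rw [if_pos hik, hikeq, Matrix.one_apply_eq]
      have hk : m - 1 - (k : ℕ) = m - 1 - (i : ℕ) := by omega
      rw [hk, ← hvval, ← mul_pow, ← Units.val_mul, mul_inv_cancel]
      simp
    · rw [if_neg hik, mul_zero, Matrix.one_apply_ne]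
      intro he
      apply hik
      have := i.isLt
      rw [he]
      omega
  have hBA : B * A = 1 := mul_eq_one_comm.mp hAB
  have hU : IsUnit A := ⟨⟨A, B, hAB, hBA⟩, rfl⟩
  -- main entrywise identity
  have hmain : A * J.transpose = -(q • (J * A)) := by
    ext i k
    rw [Matrix.mul_apply]
    have hL : ∀ j : Fin m, A i j * J.transpose j k =
        if (j : ℕ) = (k : ℕ) + 1 then A i j else 0 := by
      intro j
      rw [Matrix.transpose_apply, hJ]
      simp only [Matrix.of_apply]
      split <;> simp
    rw [Finset.sum_congr rfl fun j _ => hL j, sum_ite_fin]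
    have hR : (-(q • (J * A))) i k = -(q * ((J * A) i k)) := by
      simp
    rw [hR, Matrix.mul_apply]
    have hL2 : ∀ j : Fin m, J i j * A j k =
        if (j : ℕ) = (i : ℕ) + 1 then A j k else 0 := by
      intro j
      rw [hJ]
      simp only [Matrix.of_apply]
      split <;> simp
    rw [Finset.sum_congr rfl fun j _ => hL2 j, sum_ite_fin]
    rw [hA]
    simp only [Matrix.of_apply]
    by_cases h1 : (k : ℕ) + 1 < m
    · rw [dif_pos h1]
      by_cases h2 : (i : ℕ) + ((k : ℕ) + 1) = m - 1
      · have h3 : (i : ℕ) + 1 < m := by omega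
        rw [dif_pos h3, if_pos h2, if_pos (by simpa using by omega : (⟨(i:ℕ)+1, h3⟩ : Fin m).val + (k : ℕ) = m - 1)]
        have he : m - 1 - (i : ℕ) = (m - 1 - ((i : ℕ) + 1)) + 1 := by omega
        rw [he, pow_succ]
        ring
      · rw [if_neg (by simpa using h2)]
        by_cases h3 : (i : ℕ) + 1 < m
        · rw [dif_pos h3, if_neg (by omega)]
          ring
        · rw [dif_neg h3]
          ring
    · rw [dif_neg h1]
      have := k.isLt
      by_cases h3 : (i : ℕ) + 1 < m
      · rw [dif_pos h3, if_neg (by omega)]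
        ring
      · rw [dif_neg h3]
        ring
  refine ⟨hU, ?_, hmain⟩
  have hdet : IsUnit A.det := A.isUnit_iff_isUnit_det.mp hU
  have hAinv : A * A⁻¹ = 1 := A.mul_nonsing_inv hdet
  rw [hmain]
  rw [neg_mul, Matrix.smul_mul, Matrix.mul_assoc, hAinv, Matrix.mul_one]
end
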